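/- Let k be a positive integer, G a graph with chromatic number at most r, and P ⊆ V(G). Let D_G(P,3) be the set of unordered pairs {x,y} of distinct vertices of P with d_G(x,y) ≤ 3. If |D_G(P,3)| ≤ k(k+1)/2, then every proper coloring d : P → {1,...,r+1} of G[P] can be extended to a proper coloring f : V(G) → {1,...,r+k} of G with f(u)=d(u) for each u ∈ P. -/

import Mathlib

open Finset


lemma weight_mono {V : Type*} [DecidableEq V] (Kadj : V → V → Prop) [DecidableRel Kadj]
    (Qn : V → Prop) [DecidablePred Qn] {S T : Finset V} (h : T ⊆ S) :
    ∑ v ∈ T, ((T.filter (fun w => Kadj v w)).card + 2 * (if Qn v then 1 else 0))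
      ≤ ∑ v ∈ S, ((S.filter (fun w => Kadj v w)).card + 2 * (if Qn v then 1 else 0)) :=
  le_trans (sum_le_sum fun _ _ => add_le_add_left (card_le_card (filter_subset_filter _ h)) _)
    (sum_le_sum_of_subset h)

lemma greedy {V : Type*} [Fintype V] [DecidableEq V] (k : ℕ) (hk : 1 ≤ k)
    (Kadj : V → V → Prop) [DecidableRel Kadj] (hsym : ∀ u v, Kadj u v → Kadj v u)
    (hirr : ∀ u, ¬ Kadj u u)
    (Qn : V → Prop) [DecidablePred Qn] :
    ∀ (n : ℕ) (S : Finset V), S.card ≤ n →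
      (∑ v ∈ S, ((S.filter (fun w => Kadj v w)).card + 2 * (if Qn v then 1 else 0)) ≤ k * (k + 1)) →
      ∃ μ : V → ℕ,
        (∀ v, v ∉ S → μ v = 0) ∧
        (∀ u ∈ S, μ u ≤ k) ∧
        (∀ u ∈ S, ∀ u' ∈ S, Kadj u u' → 1 ≤ μ u → 1 ≤ μ u' → μ u ≠ μ u') ∧
        (∀ u ∈ S, Qn u → 1 ≤ μ u → μ u ≠ 1) ∧
        (∀ u ∈ S, ∀ u' ∈ S, μ u = 0 → μ u' = 0 → u = u') := by
  intro n
  induction n with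
  | zero =>
    intro S hS _
    have : S = ∅ := card_eq_zero.mp (Nat.le_zero.mp hS)
    subst this
    exact ⟨fun _ => 0, fun _ _ => rfl, by simp, by simp, by simp, by simp⟩
  | succ n ih =>
    intro S hcard hW
    rcases S.eq_empty_or_nonempty with rfl | hne
    · exact ⟨fun _ => 0, fun _ _ => rfl, by simp, by simp, by simp, by simp⟩
    obtain ⟨u, huS, hmin⟩ := S.exists_min_image
      (fun v => (S.filter (fun w => Kadj v w)).card + 2 * (if Qn v then 1 else 0)) hne
    set S' := S.erase u with hS'def
    have hS'sub : S' ⊆ S := erase_subset _ _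
    have hS'card : S'.card ≤ n := by
      have h1 := card_erase_of_mem huS
      have h2 := card_pos.mpr hne
      simp only [hS'def]
      omega
    obtain ⟨μ', h0, hle, hprop, hQ, hz⟩ :=
      ih S' hS'card (le_trans (weight_mono Kadj Qn hS'sub) hW)
    have huS' : u ∉ S' := notMem_erase _ _
    set N : Finset V := S'.filter (fun v => Kadj u v ∧ 1 ≤ μ' v) with hNdef
    set blocked : Finset ℕ := N.image μ' ∪ (if Qn u then {1} else ∅) with hbdef
    by_cases hA : ((Finset.Icc 1 k) \ blocked).Nonempty
    · -- success: color u with some available color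
      obtain ⟨c₀, hc₀⟩ := hA
      rw [mem_sdiff] at hc₀
      obtain ⟨hc₀I, hc₀b⟩ := hc₀
      rw [Finset.mem_Icc] at hc₀I
      refine ⟨Function.update μ' u c₀, ?_, ?_, ?_, ?_, ?_⟩
      · intro v hv
        have hvu : v ≠ u := by rintro rfl; exact hv huS
        rw [Function.update_of_ne hvu _ _]
        exact h0 v (fun h => hv (hS'sub h))
      · intro w hw
        rcases eq_or_ne w u with hw' | hne'
        · subst hw'
          rw [Function.update_self]; exact hc₀I.2
        · rw [Function.update_of_ne hne' _ _]
          exact hle w (mem_erase.mpr ⟨hne', hw⟩)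
      · intro a ha b hb hab h1a h1b
        rcases eq_or_ne a u with ha' | hnea
        · subst ha'
          rcases eq_or_ne b a with hb' | hneb
          · subst hb'; exact absurd hab (hirr _)
          · rw [Function.update_self] at h1a ⊢
            rw [Function.update_of_ne hneb _ _] at h1b ⊢
            intro hcontra
            apply hc₀b
            rw [hbdef]
            refine mem_union_left _ (mem_image.mpr ⟨b, ?_, hcontra.symm⟩)
            exact mem_filter.mpr ⟨mem_erase.mpr ⟨hneb, hb⟩, hab, h1b⟩
        · rcases eq_or_ne b u with hb' | hneb
          · subst hb'
            rw [Function.update_self] at h1b ⊢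
            rw [Function.update_of_ne hnea _ _] at h1a ⊢
            intro hcontra
            apply hc₀b
            rw [hbdef]
            refine mem_union_left _ (mem_image.mpr ⟨a, ?_, hcontra⟩)
            exact mem_filter.mpr ⟨mem_erase.mpr ⟨hnea, ha⟩, hsym _ _ hab, h1a⟩
          · rw [Function.update_of_ne hnea _ _] at h1a ⊢
            rw [Function.update_of_ne hneb _ _] at h1b ⊢
            exact hprop a (mem_erase.mpr ⟨hnea, ha⟩) b (mem_erase.mpr ⟨hneb, hb⟩) hab h1a h1b
      · intro a ha hQa h1a
        rcases eq_or_ne a u with ha' | hnea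
        · subst ha'
          rw [Function.update_self]
          intro hcontra
          apply hc₀b
          rw [hbdef]
          refine mem_union_right _ ?_
          rw [if_pos hQa, hcontra]
          exact mem_singleton_self 1
        · rw [Function.update_of_ne hnea _ _] at h1a ⊢
          exact hQ a (mem_erase.mpr ⟨hnea, ha⟩) hQa h1a
      · intro a ha b hb h0a h0b
        rcases eq_or_ne a u with ha' | hnea
        · subst ha'
          rw [Function.update_self] at h0a; omega
        · rcases eq_or_ne b u with hb' | hneb
          · subst hb'
            rw [Function.update_self] at h0b; omega
          · rw [Function.update_of_ne hnea _ _] at h0a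
            rw [Function.update_of_ne hneb _ _] at h0b
            exact hz a (mem_erase.mpr ⟨hnea, ha⟩) b (mem_erase.mpr ⟨hneb, hb⟩) h0a h0b
    · -- failure: no available color for u
      have hsubb : Finset.Icc 1 k ⊆ blocked := by
        rw [not_nonempty_iff_eq_empty, sdiff_eq_empty_iff_subset] at hA
        exact hA
      have hkle : k ≤ N.card + (if Qn u then 1 else 0) := by
        have h1 : (Finset.Icc 1 k).card = k := by rw [Nat.card_Icc]; omega
        have h2 : blocked.card ≤ N.card + (if Qn u then 1 else 0) := by
          refine le_trans (card_union_le _ _) (add_le_add (card_image_le) ?_)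
          split <;> simp
        have := card_le_card hsubb
        omega
      by_cases hzero : ∃ z ∈ S', μ' z = 0
      · -- contradiction via counting
        exfalso
        obtain ⟨z, hzS', hz0⟩ := hzero
        have hzN : z ∉ N := by
          rw [hNdef, mem_filter]; rintro ⟨-, -, h⟩; omega
        have huzN : u ∉ insert z N := by
          rw [mem_insert]
          rintro (rfl | h)
          · exact huS' hzS'
          · exact huS' (mem_of_mem_filter _ h)
        have hsubS : insert u (insert z N) ⊆ S := by
          intro x hx
          rw [mem_insert, mem_insert] at hx
          rcases hx with rfl | rfl | h
          · exact huS
          · exact hS'sub hzS'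
          · exact hS'sub (mem_of_mem_filter _ h)
        have hcards : N.card + 2 ≤ S.card := by
          have h1 : (insert u (insert z N)).card = N.card + 2 := by
            rw [card_insert_of_notMem huzN, card_insert_of_notMem hzN]
          have := card_le_card hsubS
          omega
        have hdeg : N.card ≤ (S.filter (fun w => Kadj u w)).card := by
          apply card_le_card
          intro x hx
          rw [hNdef, mem_filter] at hx
          exact mem_filter.mpr ⟨hS'sub hx.1, hx.2.1⟩
        set fq : ℕ := (if Qn u then 1 else 0) with hfqdef
        have hfq1 : fq ≤ 1 := by rw [hfqdef]; split <;> omega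
        have hWu : k + fq ≤ (S.filter (fun w => Kadj u w)).card + 2 * fq := by omega
        have hsum : S.card * (k + fq) ≤ ∑ v ∈ S, ((S.filter (fun w => Kadj v w)).card + 2 * (if Qn v then 1 else 0)) := by
          have := card_nsmul_le_sum S
            (fun v => (S.filter (fun w => Kadj v w)).card + 2 * (if Qn v then 1 else 0))
            (k + fq) (fun v hv => le_trans hWu (hmin v hv))
          simpa [smul_eq_mul] using this
        have hfinal : (N.card + 2) * (k + fq) ≤ k * (k + 1) :=
          le_trans (Nat.mul_le_mul_right _ hcards) (le_trans hsum hW)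
        -- k ≤ N.card + fq, fq ≤ 1, k ≥ 1 : contradiction
        rcases Nat.lt_or_ge fq 1 with h | h
        · have hfq0 : fq = 0 := by omega
          rw [hfq0] at hfinal hkle
          nlinarith
        · have hfq1' : fq = 1 := by omega
          rw [hfq1'] at hfinal hkle
          nlinarith
      · -- u becomes the unique zero
        push_neg at hzero
        refine ⟨Function.update μ' u 0, ?_, ?_, ?_, ?_, ?_⟩
        · intro v hv
          have hvu : v ≠ u := by rintro rfl; exact hv huS
          rw [Function.update_of_ne hvu _ _]
          exact h0 v (fun h => hv (hS'sub h))
        · intro w hw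
          rcases eq_or_ne w u with hw' | hne'
          · subst hw'
            rw [Function.update_self]; omega
          · rw [Function.update_of_ne hne' _ _]
            exact hle w (mem_erase.mpr ⟨hne', hw⟩)
        · intro a ha b hb hab h1a h1b
          rcases eq_or_ne a u with ha' | hnea
          · subst ha'
            rw [Function.update_self] at h1a; omega
          · rcases eq_or_ne b u with hb' | hneb
            · subst hb'
              rw [Function.update_self] at h1b; omega
            · rw [Function.update_of_ne hnea _ _] at h1a ⊢
              rw [Function.update_of_ne hneb _ _] at h1b ⊢
              exact hprop a (mem_erase.mpr ⟨hnea, ha⟩) b (mem_erase.mpr ⟨hneb, hb⟩) hab h1a h1b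
        · intro a ha hQa h1a
          rcases eq_or_ne a u with ha' | hnea
          · subst ha'
            rw [Function.update_self] at h1a; omega
          · rw [Function.update_of_ne hnea _ _] at h1a ⊢
            exact hQ a (mem_erase.mpr ⟨hnea, ha⟩) hQa h1a
        · intro a ha b hb h0a h0b
          rcases eq_or_ne a u with ha' | hnea
          · subst ha'
            rcases eq_or_ne b a with hb' | hneb
            · subst hb'; rfl
            · rw [Function.update_of_ne hneb _ _] at h0b
              exact absurd (hzero b (mem_erase.mpr ⟨hneb, hb⟩)) (by rw [h0b]; exact fun h => h rfl)
          · rw [Function.update_of_ne hnea _ _] at h0a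
            exact absurd (hzero a (mem_erase.mpr ⟨hnea, ha⟩)) (by rw [h0a]; exact fun h => h rfl)

/-- The set of unordered pairs of distinct vertices of `P` at distance at most `m` in `G`. -/
def pairsAtMost {V : Type*} (G : SimpleGraph V) (P : Set V) (m : ℕ) : Set (Sym2 V) :=
  {e | ∃ x y, e = s(x, y) ∧ x ∈ P ∧ y ∈ P ∧ x ≠ y ∧ ∃ p : G.Walk x y, p.length ≤ m}

/-- Distance-3 conflict relation on precolored vertices not using color `r+1`. -/
def Kd {V : Type*} (G : SimpleGraph V) (P : Set V) (d : V → ℕ) (r : ℕ) (u u' : V) : Prop :=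
  u ≠ u' ∧ u ∈ P ∧ u' ∈ P ∧ d u ≠ r + 1 ∧ d u' ≠ r + 1 ∧ ∃ p : G.Walk u u', p.length ≤ 3

/-- Being within distance 2 of a precolored vertex of color `r+1`. -/
def Qd {V : Type*} (G : SimpleGraph V) (P : Set V) (d : V → ℕ) (r : ℕ) (u : V) : Prop :=
  ∃ w, w ∈ P ∧ d w = r + 1 ∧ w ≠ u ∧ ∃ p : G.Walk u w, p.length ≤ 2

open Classical in
noncomputable def Qwit {V : Type*} (G : SimpleGraph V) (P : Set V) (d : V → ℕ) (r : ℕ) (v : V) : V :=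
  if h : Qd G P d r v then h.choose else v

lemma Qwit_spec {V : Type*} (G : SimpleGraph V) (P : Set V) (d : V → ℕ) (r : ℕ) (v : V)
    (h : Qd G P d r v) : Qwit G P d r v ∈ P ∧ d (Qwit G P d r v) = r + 1 ∧
      Qwit G P d r v ≠ v ∧ ∃ p : G.Walk v (Qwit G P d r v), p.length ≤ 2 := by
  classical
  rw [Qwit]
  rw [dif_pos h]
  exact h.choose_spec

lemma count_bound {V : Type*} [Fintype V] [DecidableEq V] (G : SimpleGraph V) (P : Set V)
    (d : V → ℕ) (r k : ℕ) [DecidableRel (Kd G P d r)] [DecidablePred (Qd G P d r)]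
    (S : Finset V) (hS : ∀ u ∈ S, u ∈ P ∧ d u ≠ r + 1)
    (hD : 2 * (pairsAtMost G P 3).ncard ≤ k * (k + 1)) :
    ∑ v ∈ S, ((S.filter (fun w => Kd G P d r v w)).card + 2 * (if Qd G P d r v then 1 else 0))
      ≤ k * (k + 1) := by
  classical
  set pf := (pairsAtMost G P 3).toFinite.toFinset with hpf
  have hpfcard : pf.card = (pairsAtMost G P 3).ncard := (Set.ncard_eq_toFinset_card _ _).symm
  set Apairs := (S ×ˢ S).filter (fun p : V × V => Kd G P d r p.1 p.2) with hAp
  set B := S.filter (Qd G P d r) with hB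
  have hsum1 : Apairs.card = ∑ v ∈ S, (S.filter (fun w => Kd G P d r v w)).card := by
    rw [Finset.card_eq_sum_card_fiberwise (f := Prod.fst) (t := S)
      (fun p hp => (Finset.mem_product.mp (Finset.mem_filter.mp hp).1).1)]
    apply Finset.sum_congr rfl
    intro v hv
    apply Finset.card_bij' (i := fun (p : V × V) _ => p.2) (j := fun w _ => (v, w))
    · intro p hp
      rw [Finset.mem_filter] at hp
      obtain ⟨hp1, hp2⟩ := hp
      rw [Finset.mem_filter, Finset.mem_product] at hp1
      exact Finset.mem_filter.mpr ⟨hp1.1.2, hp2 ▸ hp1.2⟩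
    · intro w hw
      rw [Finset.mem_filter] at hw
      refine Finset.mem_filter.mpr ⟨?_, rfl⟩
      rw [Finset.mem_filter, Finset.mem_product]
      exact ⟨⟨hv, hw.1⟩, hw.2⟩
    · intro p hp
      have h2 := (Finset.mem_filter.mp hp).2
      exact Prod.ext h2.symm rfl
    · intro w hw; rfl
  set imA := Apairs.image (fun p : V × V => s(p.1, p.2)) with himAdef
  set imB := B.image (fun v => s(v, Qwit G P d r v)) with himBdef
  have hA2 : Apairs.card ≤ 2 * imA.card := by
    rw [Finset.card_eq_sum_card_fiberwise (f := fun p : V × V => s(p.1, p.2)) (t := imA)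
      (fun p hp => Finset.mem_image_of_mem _ hp)]
    have hbound : ∀ e ∈ imA, (Apairs.filter (fun p : V × V => s(p.1, p.2) = e)).card ≤ 2 := by
      intro e he
      obtain ⟨p0, hp0A, hp0e⟩ := Finset.mem_image.mp he
      have hsub : Apairs.filter (fun p : V × V => s(p.1, p.2) = e) ⊆ {p0, (p0.2, p0.1)} := by
        intro q hq
        have hqe := (Finset.mem_filter.mp hq).2
        rw [← hp0e, Sym2.eq_iff] at hqe
        rcases hqe with ⟨h1, h2⟩ | ⟨h1, h2⟩
        · exact Finset.mem_insert.mpr (Or.inl (Prod.ext h1 h2))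
        · refine Finset.mem_insert.mpr (Or.inr ?_)
          rw [Finset.mem_singleton]
          exact Prod.ext h1 h2
      calc (Apairs.filter (fun p : V × V => s(p.1, p.2) = e)).card
          ≤ ({p0, (p0.2, p0.1)} : Finset (V × V)).card := Finset.card_le_card hsub
        _ ≤ 2 := le_trans (Finset.card_insert_le _ _) (by simp)
    calc ∑ e ∈ imA, (Apairs.filter (fun p : V × V => s(p.1, p.2) = e)).card
        ≤ ∑ _e ∈ imA, 2 := Finset.sum_le_sum hbound
      _ = 2 * imA.card := by rw [Finset.sum_const, smul_eq_mul, mul_comm]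
  have hBcard : B.card = imB.card := by
    rw [himBdef, Finset.card_image_of_injOn]
    intro a ha b hb hab
    have hQb := (Finset.mem_filter.mp hb).2
    have hda := (hS a (Finset.mem_filter.mp ha).1).2
    rw [Sym2.eq_iff] at hab
    rcases hab with ⟨h1, _⟩ | ⟨h1, _⟩
    · exact h1
    · exact absurd (h1 ▸ (Qwit_spec G P d r b hQb).2.1) hda
  have himA : imA ⊆ pf := by
    intro e he
    obtain ⟨p, hpA, hpe⟩ := Finset.mem_image.mp he
    obtain ⟨hne, hP1, hP2, _, _, hwalk⟩ := (Finset.mem_filter.mp hpA).2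
    rw [hpf, Set.Finite.mem_toFinset]
    exact ⟨p.1, p.2, hpe.symm, hP1, hP2, hne, hwalk⟩
  have himB : imB ⊆ pf := by
    intro e he
    obtain ⟨v, hvB, hve⟩ := Finset.mem_image.mp he
    have hQv := (Finset.mem_filter.mp hvB).2
    obtain ⟨hw1, hw2, hw3, p, hp⟩ := Qwit_spec G P d r v hQv
    have hvP := (hS v (Finset.mem_filter.mp hvB).1).1
    rw [hpf, Set.Finite.mem_toFinset]
    exact ⟨v, Qwit G P d r v, hve.symm, hvP, hw1, hw3.symm, p, le_trans hp (by omega)⟩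
  have hdisj : Disjoint imA imB := by
    rw [Finset.disjoint_left]
    intro e heA heB
    obtain ⟨p, hpA, hpe⟩ := Finset.mem_image.mp heA
    obtain ⟨v, hvB, hve⟩ := Finset.mem_image.mp heB
    have hK := (Finset.mem_filter.mp hpA).2
    have hQv := (Finset.mem_filter.mp hvB).2
    have hwd := (Qwit_spec G P d r v hQv).2.1
    have heq : s(p.1, p.2) = s(v, Qwit G P d r v) := hpe.trans hve.symm
    rw [Sym2.eq_iff] at heq
    rcases heq with ⟨_, h2⟩ | ⟨h1, _⟩
    · exact hK.2.2.2.2.1 (h2 ▸ hwd)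
    · exact hK.2.2.2.1 (h1 ▸ hwd)
  have hchain : Apairs.card + 2 * B.card ≤ 2 * pf.card := by
    have h1 : imA.card + imB.card = (imA ∪ imB).card := (Finset.card_union_of_disjoint hdisj).symm
    have h2 : (imA ∪ imB).card ≤ pf.card := Finset.card_le_card (Finset.union_subset himA himB)
    omega
  have hsum2 : ∑ v ∈ S, ((S.filter (fun w => Kd G P d r v w)).card + 2 * (if Qd G P d r v then 1 else 0))
      = Apairs.card + 2 * B.card := by
    rw [Finset.sum_add_distrib, hsum1]
    congr 1
    rw [← Finset.mul_sum]
    congr 1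
    rw [hB, Finset.card_filter]
  rw [hsum2]
  calc Apairs.card + 2 * B.card ≤ 2 * pf.card := hchain
    _ = 2 * (pairsAtMost G P 3).ncard := by rw [hpfcard]
    _ ≤ k * (k + 1) := hD

/-- If |D_G(P,3)| ≤ k(k+1)/2 then any (r+1)-precoloring of P extends to
an (r+k)-coloring of G. -/
theorem stmt_3 {V : Type*} [Fintype V] (k r : ℕ) (hk : 1 ≤ k)
    (G : SimpleGraph V) (hχ : G.chromaticNumber ≤ r) (P : Set V)
    (hD : 2 * (pairsAtMost G P 3).ncard ≤ k * (k + 1))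
    (d : V → ℕ) (hd : ∀ x ∈ P, ∀ y ∈ P, G.Adj x y → d x ≠ d y)
    (hdr : ∀ x ∈ P, d x ∈ Finset.Icc 1 (r + 1)) :
    ∃ f : V → ℕ, (∀ u v, G.Adj u v → f u ≠ f v) ∧
      (∀ v, f v ∈ Finset.Icc 1 (r + k)) ∧ ∀ u ∈ P, f u = d u := by
  classical
  rcases isEmpty_or_nonempty V with hV | hV
  · exact ⟨fun _ => 1, fun u => isEmptyElim u, fun v => isEmptyElim v, fun u => isEmptyElim u⟩
  obtain ⟨C⟩ := SimpleGraph.chromaticNumber_le_iff_colorable.mp hχ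
  set c0 : V → ℕ := fun v => (C v).val + 1 with hc0
  have hc0prop : ∀ v w, G.Adj v w → c0 v ≠ c0 w := by
    intro v w hadj heq
    exact C.valid hadj (Fin.val_injective (by rw [hc0] at heq; simp only at heq; omega))
  have hc0mem : ∀ v, c0 v ∈ Finset.Icc 1 r := by
    intro v
    have h1 : c0 v = (C v).val + 1 := rfl
    have h2 := (C v).isLt
    rw [Finset.mem_Icc]
    omega
  set Sfin : Finset V := Finset.univ.filter (fun u => u ∈ P ∧ d u ≠ r + 1) with hSfin
  have hSmem : ∀ u, u ∈ Sfin ↔ (u ∈ P ∧ d u ≠ r + 1) := by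
    intro u; rw [hSfin]; simp
  have hKsym : ∀ u v, Kd G P d r u v → Kd G P d r v u := by
    rintro u v ⟨hne, h1, h2, h3, h4, p, hp⟩
    exact ⟨hne.symm, h2, h1, h4, h3, p.reverse, by rwa [SimpleGraph.Walk.length_reverse]⟩
  have hKirr : ∀ u, ¬ Kd G P d r u u := by rintro u ⟨hne, _⟩; exact hne rfl
  have hcount := count_bound G P d r k Sfin (fun u hu => (hSmem u).mp hu) hD
  obtain ⟨μ, hμ0, hμk, hμprop, hμQ, hμz⟩ :=
    greedy k hk (Kd G P d r) hKsym hKirr (Qd G P d r) Sfin.card Sfin le_rfl hcount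
  -- build the (possibly locally permuted) base coloring
  have hc'ex : ∃ c' : V → ℕ, (∀ v w, G.Adj v w → c' v ≠ c' w) ∧ (∀ v, c' v ∈ Finset.Icc 1 r) ∧
      (∀ u, u ∈ Sfin → μ u = 0 → ∀ v, G.Adj u v → c' v ≠ d u) := by
    by_cases hzero : ∃ u₀ ∈ Sfin, μ u₀ = 0
    · obtain ⟨u₀, hu₀S, hu₀0⟩ := hzero
      obtain ⟨hu₀P, hu₀d⟩ := (hSmem u₀).mp hu₀S
      have hbmem : d u₀ ∈ Finset.Icc 1 r := by
        have := hdr u₀ hu₀P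
        rw [Finset.mem_Icc] at this ⊢
        omega
      refine ⟨fun v => if G.Reachable u₀ v then
          (if c0 v = c0 u₀ then d u₀ else if c0 v = d u₀ then c0 u₀ else c0 v) else c0 v,
          ?_, ?_, ?_⟩
      · intro v w hadj
        dsimp only
        have hr : G.Reachable u₀ v ↔ G.Reachable u₀ w :=
          ⟨fun h => h.trans hadj.reachable, fun h => h.trans hadj.symm.reachable⟩
        by_cases hv : G.Reachable u₀ v
        · rw [if_pos hv, if_pos (hr.mp hv)]
          have := hc0prop v w hadj
          split_ifs <;> omega
        · rw [if_neg hv, if_neg (fun h => hv (hr.mpr h))]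
          exact hc0prop v w hadj
      · intro v
        dsimp only
        by_cases hv : G.Reachable u₀ v
        · rw [if_pos hv]
          have h1 := hc0mem v
          have h2 := hc0mem u₀
          rw [Finset.mem_Icc] at h1 h2 hbmem ⊢
          split_ifs <;> omega
        · rw [if_neg hv]; exact hc0mem v
      · intro u huS hu0 v hadj
        dsimp only
        have heq : u = u₀ := hμz u huS u₀ hu₀S hu0 hu₀0
        subst heq
        rw [if_pos hadj.reachable]
        have hvne : c0 v ≠ c0 u := (hc0prop u v hadj).symm
        split_ifs <;> omega
    · refine ⟨c0, hc0prop, hc0mem, fun u huS hu0 => absurd ⟨u, huS, hu0⟩ hzero⟩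
  obtain ⟨c', hc'prop, hc'mem, hc'zero⟩ := hc'ex
  set Conf : V → Prop := fun v => ∃ u, u ∈ P ∧ G.Adj u v ∧ c' v = d u with hConf
  set f : V → ℕ := fun v => if v ∈ P then d v
    else if h : Conf v then r + (μ (h.choose)) else c' v with hf
  have hfP : ∀ v, v ∈ P → f v = d v := by
    intro v hv; rw [hf]; simp only [if_pos hv]
  have hfconf : ∀ v, v ∉ P → ∀ h : Conf v, ∃ u, u ∈ P ∧ G.Adj u v ∧ c' v = d u ∧
      d u ≠ r + 1 ∧ 1 ≤ μ u ∧ μ u ≤ k ∧ f v = r + μ u := by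
    intro v hvP h
    obtain ⟨huP, huAdj, huc⟩ := h.choose_spec
    have hdu : d h.choose ≠ r + 1 := by
      have := hc'mem v
      rw [Finset.mem_Icc] at this
      omega
    have huS : h.choose ∈ Sfin := (hSmem _).mpr ⟨huP, hdu⟩
    have h1 : 1 ≤ μ h.choose := by
      rcases Nat.eq_zero_or_pos (μ h.choose) with h0 | h1
      · exact absurd huc (hc'zero _ huS h0 v huAdj)
      · exact h1
    refine ⟨h.choose, huP, huAdj, huc, hdu, h1, hμk _ huS, ?_⟩
    rw [hf]
    simp only [if_neg hvP]
    rw [dif_pos h]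
  have hfnc : ∀ v, v ∉ P → ¬ Conf v → f v = c' v := by
    intro v h1 h2; rw [hf]; simp only [if_neg h1]; rw [dif_neg h2]
  have case1 : ∀ v w, G.Adj v w → v ∈ P → w ∉ P → f v ≠ f w := by
    intro v w hadj hv hw
    rw [hfP v hv]
    by_cases hcw : Conf w
    · obtain ⟨u, huP, huAdj, huc, hdu, h1, hk2, hfw⟩ := hfconf w hw hcw
      rw [hfw]
      have hdv := hdr v hv
      rw [Finset.mem_Icc] at hdv
      by_cases hdveq : d v = r + 1
      · have hvu : v ≠ u := by intro h; rw [h] at hdveq; exact hdu hdveq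
        have hQn : Qd G P d r u := ⟨v, hv, hdveq, hvu,
          SimpleGraph.Walk.cons huAdj (SimpleGraph.Walk.cons hadj.symm SimpleGraph.Walk.nil),
          by simp⟩
        have huS : u ∈ Sfin := (hSmem u).mpr ⟨huP, hdu⟩
        have := hμQ u huS hQn h1
        omega
      · omega
    · rw [hfnc w hw hcw]
      intro heq
      exact hcw ⟨v, hv, hadj, heq.symm⟩
  have case2 : ∀ v w, G.Adj v w → v ∉ P → w ∉ P → f v ≠ f w := by
    intro v w hadj hv hw
    by_cases hcv : Conf v <;> by_cases hcw : Conf w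
    · obtain ⟨u1, hu1P, hu1A, hu1c, hdu1, h11, hk1, hfv⟩ := hfconf v hv hcv
      obtain ⟨u2, hu2P, hu2A, hu2c, hdu2, h12, hk2, hfw⟩ := hfconf w hw hcw
      rw [hfv, hfw]
      by_cases h12eq : u1 = u2
      · exfalso
        apply hc'prop v w hadj
        rw [hu1c, hu2c, h12eq]
      · have hK : Kd G P d r u1 u2 := ⟨h12eq, hu1P, hu2P, hdu1, hdu2,
          SimpleGraph.Walk.cons hu1A (SimpleGraph.Walk.cons hadj
            (SimpleGraph.Walk.cons hu2A.symm SimpleGraph.Walk.nil)), by simp⟩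
        have := hμprop u1 ((hSmem _).mpr ⟨hu1P, hdu1⟩) u2 ((hSmem _).mpr ⟨hu2P, hdu2⟩) hK h11 h12
        omega
    · obtain ⟨u1, _, _, _, _, h11, hk1, hfv⟩ := hfconf v hv hcv
      rw [hfv, hfnc w hw hcw]
      have := hc'mem w
      rw [Finset.mem_Icc] at this
      omega
    · obtain ⟨u2, _, _, _, _, h12, hk2, hfw⟩ := hfconf w hw hcw
      rw [hfw, hfnc v hv hcv]
      have := hc'mem v
      rw [Finset.mem_Icc] at this
      omega
    · rw [hfnc v hv hcv, hfnc w hw hcw]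
      exact hc'prop v w hadj
  refine ⟨f, ?_, ?_, hfP⟩
  · intro v w hadj
    by_cases hv : v ∈ P <;> by_cases hw : w ∈ P
    · rw [hfP v hv, hfP w hw]; exact hd v hv w hw hadj
    · exact case1 v w hadj hv hw
    · exact (case1 w v hadj.symm hw hv).symm
    · exact case2 v w hadj hv hw
  · intro v
    rw [Finset.mem_Icc]
    by_cases hv : v ∈ P
    · rw [hfP v hv]
      have := hdr v hv
      rw [Finset.mem_Icc] at this
      omega
    · by_cases hcv : Conf v
      · obtain ⟨u, _, _, _, _, h1, hk2, hfv⟩ := hfconf v hv hcv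
        rw [hfv]; omega
      · rw [hfnc v hv hcv]
        have := hc'mem v
        rw [Finset.mem_Icc] at this
        omega
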